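/- Let q > p > 2, ε ∈ (0,1/2), K > 0. Define ρ_ε(u,v) = ∫₀^v ∫₀^z f_ε(u,s) ds dz with f_ε as above, H_ε(u,v) = ∂_u ρ_ε + ((v²+ε²)^{(q-p+2)/2}/(p−1)) ∂_{vv} ρ_ε − v ∂_{uv} ρ_ε, and Φ_ε(u,v) = ρ_ε(u,v) − ∫₀^u H_ε(s,0) ds + (K+1). Then Φ_ε satisfies the differential equation ∂_u Φ_ε(u,v) − v ∂_{uv} Φ_ε(u,v) + ((v²+ε²)^{(q-p+2)/2}/(p−1)) ∂_{vv} Φ_ε(u,v) = 0 on [−K,K] × ℝ. -/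

import Mathlib

open Set intervalIntegral

namespace S10

noncomputable def Bs (p q ε K u s : ℝ) : ℝ :=
  1 + (q - p) / (p - 1) * (s ^ 2 + ε ^ 2) ^ ((q - p) / 2) * (K + 1 - u)

noncomputable def F (p q ε K u s : ℝ) : ℝ :=
  Bs p q ε K u s ^ (-((q - p + 2) / (q - p)))

noncomputable def Fu (p q ε K u s : ℝ) : ℝ :=
  (q - p + 2) / (q - p) * ((q - p) / (p - 1)) * (s ^ 2 + ε ^ 2) ^ ((q - p) / 2) *
    Bs p q ε K u s ^ (-((q - p + 2) / (q - p)) - 1)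

noncomputable def Fv (p q ε K u v : ℝ) : ℝ :=
  -((q - p + 2) / (q - p)) * Bs p q ε K u v ^ (-((q - p + 2) / (q - p)) - 1) *
    ((q - p) / (p - 1) * (K + 1 - u) * (q - p) * v * (v ^ 2 + ε ^ 2) ^ ((q - p) / 2 - 1))

noncomputable def G (p q ε K u z : ℝ) : ℝ := ∫ s in (0:ℝ)..z, Fu p q ε K u s
noncomputable def P (p q ε K u z : ℝ) : ℝ := ∫ s in (0:ℝ)..z, F p q ε K u s
noncomputable def D (p q ε K u v : ℝ) : ℝ := ∫ z in (0:ℝ)..v, G p q ε K u z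

noncomputable def A (p q ε v : ℝ) : ℝ := (v ^ 2 + ε ^ 2) ^ ((q - p + 2) / 2) / (p - 1)

variable {p q ε K : ℝ}

lemma hX (hε : 0 < ε) (v : ℝ) : 0 < v ^ 2 + ε ^ 2 := by positivity

lemma hW (hε : 0 < ε) (v : ℝ) : 0 < (v ^ 2 + ε ^ 2) ^ ((q - p) / 2) :=
  Real.rpow_pos_of_pos (hX hε v) _

lemma hc (hp : 2 < p) (hq : p < q) : 0 < (q - p) / (p - 1) :=
  div_pos (by linarith) (by linarith)

lemma Bs_ge_one (hp : 2 < p) (hq : p < q) (hε : 0 < ε) {u : ℝ} (hu : u < K + 1) (s : ℝ) :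
    1 ≤ Bs p q ε K u s := by
  have h := mul_pos (mul_pos (hc hp hq) (hW (q := q) (p := p) hε s)) (by linarith : (0:ℝ) < K + 1 - u)
  unfold Bs; linarith

lemma Bs_pos (hp : 2 < p) (hq : p < q) (hε : 0 < ε) {u : ℝ} (hu : u < K + 1) (s : ℝ) :
    0 < Bs p q ε K u s := lt_of_lt_of_le one_pos (Bs_ge_one hp hq hε hu s)

lemma hasDerivAt_F_u (hp : 2 < p) (hq : p < q) (hε : 0 < ε) {u : ℝ} (hu : u < K + 1) (s : ℝ) :
    HasDerivAt (fun x => F p q ε K x s) (Fu p q ε K u s) u := by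
  have hB : HasDerivAt (fun x => Bs p q ε K x s)
      (-((q - p) / (p - 1) * (s ^ 2 + ε ^ 2) ^ ((q - p) / 2))) u := by
    have h := (((hasDerivAt_id u).const_sub (K + 1)).const_mul
      ((q - p) / (p - 1) * (s ^ 2 + ε ^ 2) ^ ((q - p) / 2))).const_add 1
    unfold Bs
    refine h.congr_deriv ?_
    ring
  have h2 := hB.rpow_const (p := -((q - p + 2) / (q - p))) (Or.inl (Bs_pos hp hq hε hu s).ne')
  unfold F Fu
  convert h2 using 1
  ring

lemma cont_Bs (hε : 0 < ε) (u : ℝ) : Continuous (fun s => Bs p q ε K u s) := by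
  unfold Bs
  have h : Continuous (fun s : ℝ => (s ^ 2 + ε ^ 2) ^ ((q - p) / 2)) :=
    Continuous.rpow_const (by continuity) fun s => Or.inl (hX hε s).ne'
  continuity

lemma cont_F (hp : 2 < p) (hq : p < q) (hε : 0 < ε) {u : ℝ} (hu : u < K + 1) :
    Continuous (F p q ε K u) := by
  unfold F
  exact Continuous.rpow_const (cont_Bs hε u) fun s => Or.inl (Bs_pos hp hq hε hu s).ne'

lemma cont_Fu (hp : 2 < p) (hq : p < q) (hε : 0 < ε) {u : ℝ} (hu : u < K + 1) :
    Continuous (Fu p q ε K u) := by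
  unfold Fu
  have h1 : Continuous (fun s : ℝ => (s ^ 2 + ε ^ 2) ^ ((q - p) / 2)) :=
    Continuous.rpow_const (by continuity) fun s => Or.inl (hX hε s).ne'
  have h2 : Continuous (fun s => Bs p q ε K u s ^ (-((q - p + 2) / (q - p)) - 1)) :=
    Continuous.rpow_const (cont_Bs hε u) fun s => Or.inl (Bs_pos hp hq hε hu s).ne'
  continuity


lemma hasDerivAt_F_v (hp : 2 < p) (hq : p < q) (hε : 0 < ε) {u : ℝ} (hu : u < K + 1) (v : ℝ) :
    HasDerivAt (F p q ε K u) (Fv p q ε K u v) v := by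
  have hXd : HasDerivAt (fun v : ℝ => v ^ 2 + ε ^ 2) (2 * v) v := by
    simpa using (hasDerivAt_pow 2 v).add_const (ε ^ 2)
  have hWd := hXd.rpow_const (p := (q - p) / 2) (Or.inl (hX hε v).ne')
  have hBd : HasDerivAt (fun v => Bs p q ε K u v)
      ((2 * v * ((q - p) / 2) * (v ^ 2 + ε ^ 2) ^ ((q - p) / 2 - 1)) * ((q - p) / (p - 1)) *
        (K + 1 - u)) v := by
    unfold Bs
    have h := ((hWd.const_mul ((q - p) / (p - 1))).mul_const (K + 1 - u)).const_add 1
    refine h.congr_deriv ?_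
    ring
  have h2 := hBd.rpow_const (p := -((q - p + 2) / (q - p))) (Or.inl (Bs_pos hp hq hε hu v).ne')
  unfold F Fv
  convert h2 using 1
  ring

lemma Fu_nonneg (hp : 2 < p) (hq : p < q) (hε : 0 < ε) {u : ℝ} (hu : u < K + 1) (s : ℝ) :
    0 ≤ Fu p q ε K u s := by
  unfold Fu
  have h1 : 0 < (q - p + 2) / (q - p) := div_pos (by linarith) (by linarith)
  have h2 := hc hp hq
  have h3 := hW (q := q) (p := p) hε s
  have h4 : (0:ℝ) < Bs p q ε K u s ^ (-((q - p + 2) / (q - p)) - 1) :=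
    Real.rpow_pos_of_pos (Bs_pos hp hq hε hu s) _
  positivity

lemma Fu_le (hp : 2 < p) (hq : p < q) (hε : 0 < ε) {u : ℝ} (hu : u < K + 1) (s : ℝ) :
    Fu p q ε K u s ≤ (q - p + 2) / (q - p) * ((q - p) / (p - 1)) *
      (s ^ 2 + ε ^ 2) ^ ((q - p) / 2) := by
  have h1 : Bs p q ε K u s ^ (-((q - p + 2) / (q - p)) - 1) ≤ 1 := by
    apply Real.rpow_le_one_of_one_le_of_nonpos (Bs_ge_one hp hq hε hu s)
    have h1 : 0 < (q - p + 2) / (q - p) := div_pos (by linarith) (by linarith)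
    linarith
  have h2 : 0 < (q - p + 2) / (q - p) * ((q - p) / (p - 1)) *
      (s ^ 2 + ε ^ 2) ^ ((q - p) / 2) := by
    have := hc hp hq
    have := hW (q := q) (p := p) hε s
    have h1 : 0 < (q - p + 2) / (q - p) := div_pos (by linarith) (by linarith)
    positivity
  unfold Fu
  nlinarith

lemma ball_subset {u₀ : ℝ} (hu : u₀ < K + 1) :
    ∀ u ∈ Metric.ball u₀ ((K + 1 - u₀) / 2), u < K + 1 := by
  intro u hu'
  rw [Metric.mem_ball, Real.dist_eq, abs_lt] at hu'
  linarith [hu'.2]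

lemma hasDerivAt_P (hp : 2 < p) (hq : p < q) (hε : 0 < ε) {u₀ : ℝ} (hu : u₀ < K + 1) (z : ℝ) :
    HasDerivAt (fun u => P p q ε K u z) (G p q ε K u₀ z) u₀ := by
  have hr0 : 0 < (K + 1 - u₀) / 2 := by linarith
  have hball := ball_subset (K := K) hu
  have hbc : Continuous (fun s : ℝ => (q - p + 2) / (q - p) * ((q - p) / (p - 1)) *
      (s ^ 2 + ε ^ 2) ^ ((q - p) / 2)) := by
    have h : Continuous (fun s : ℝ => (s ^ 2 + ε ^ 2) ^ ((q - p) / 2)) :=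
      Continuous.rpow_const (by continuity) fun s => Or.inl (hX hε s).ne'
    continuity
  obtain ⟨-, h⟩ := intervalIntegral.hasDerivAt_integral_of_dominated_loc_of_deriv_le
    (F := fun u s => F p q ε K u s) (F' := fun u s => Fu p q ε K u s)
    (bound := fun s => (q - p + 2) / (q - p) * ((q - p) / (p - 1)) *
      (s ^ 2 + ε ^ 2) ^ ((q - p) / 2))
    (a := 0) (b := z) (μ := MeasureTheory.volume) (Metric.ball_mem_nhds _ hr0)
    (by
      filter_upwards [Iio_mem_nhds hu] with u hu'
      exact (cont_F hp hq hε hu').aestronglyMeasurable.restrict)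
    ((cont_F hp hq hε hu).intervalIntegrable 0 z)
    (cont_Fu hp hq hε hu).aestronglyMeasurable.restrict
    (MeasureTheory.ae_of_all _ (fun s _ u hu' => by
      rw [Real.norm_eq_abs, abs_of_nonneg (Fu_nonneg hp hq hε (hball u hu') s)]
      exact Fu_le hp hq hε (hball u hu') s))
    (hbc.intervalIntegrable 0 z)
    (MeasureTheory.ae_of_all _ (fun s _ u hu' => hasDerivAt_F_u hp hq hε (hball u hu') s))
  exact h

lemma cont_P (hp : 2 < p) (hq : p < q) (hε : 0 < ε) {u : ℝ} (hu : u < K + 1) :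
    Continuous (P p q ε K u) :=
  continuous_iff_continuousAt.2 fun z =>
    (((cont_F hp hq hε hu).integral_hasStrictDerivAt 0 z).hasDerivAt).continuousAt

lemma cont_G (hp : 2 < p) (hq : p < q) (hε : 0 < ε) {u : ℝ} (hu : u < K + 1) :
    Continuous (G p q ε K u) :=
  continuous_iff_continuousAt.2 fun z =>
    (((cont_Fu hp hq hε hu).integral_hasStrictDerivAt 0 z).hasDerivAt).continuousAt

lemma abs_le_of_mem_uIoc {s z : ℝ} (h : s ∈ Set.uIoc 0 z) : |s| ≤ |z| := by
  rcases le_total 0 z with hz | hz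
  · rw [Set.uIoc_of_le hz] at h
    rw [abs_of_nonneg h.1.le, abs_of_nonneg hz]; exact h.2
  · rw [Set.uIoc_comm, Set.uIoc_of_le hz] at h
    rw [abs_of_nonpos h.2, abs_of_nonpos hz]; linarith [h.1]


lemma G_bound (hp : 2 < p) (hq : p < q) (hε : 0 < ε) {u : ℝ} (hu : u < K + 1) {v z : ℝ}
    (hz : z ∈ Set.uIoc 0 v) :
    ‖G p q ε K u z‖ ≤ (q - p + 2) / (q - p) * ((q - p) / (p - 1)) *
      (v ^ 2 + ε ^ 2) ^ ((q - p) / 2) * |v| := by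
  have habsz : |z| ≤ |v| := abs_le_of_mem_uIoc hz
  have hWle : ∀ s : ℝ, |s| ≤ |z| → (s ^ 2 + ε ^ 2) ^ ((q - p) / 2) ≤
      (v ^ 2 + ε ^ 2) ^ ((q - p) / 2) := by
    intro s hs
    apply Real.rpow_le_rpow (by positivity) _ (by linarith)
    have h1 : s ^ 2 ≤ v ^ 2 := by
      have := abs_nonneg s
      have := abs_nonneg z
      nlinarith [sq_abs s, sq_abs v, hs, habsz]
    linarith
  have key : ‖G p q ε K u z‖ ≤ ((q - p + 2) / (q - p) * ((q - p) / (p - 1)) *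
      (v ^ 2 + ε ^ 2) ^ ((q - p) / 2)) * |z - 0| := by
    apply intervalIntegral.norm_integral_le_of_norm_le_const
    intro s hs
    rw [Real.norm_eq_abs, abs_of_nonneg (Fu_nonneg hp hq hε hu s)]
    calc Fu p q ε K u s ≤ (q - p + 2) / (q - p) * ((q - p) / (p - 1)) *
          (s ^ 2 + ε ^ 2) ^ ((q - p) / 2) := Fu_le hp hq hε hu s
      _ ≤ _ := by
          have h1 : 0 < (q - p + 2) / (q - p) := div_pos (by linarith) (by linarith)
          have h2 := hc hp hq
          have h3 := hWle s (abs_le_of_mem_uIoc hs)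
          exact mul_le_mul_of_nonneg_left h3 (mul_pos h1 h2).le
  rw [sub_zero] at key
  calc ‖G p q ε K u z‖ ≤ _ := key
    _ ≤ _ := by
        have h1 : 0 < (q - p + 2) / (q - p) := div_pos (by linarith) (by linarith)
        have h2 := hc hp hq
        have h3 := hW (q := q) (p := p) hε v
        exact mul_le_mul_of_nonneg_left habsz (mul_pos (mul_pos h1 h2) h3).le

lemma hasDerivAt_rho_u (hp : 2 < p) (hq : p < q) (hε : 0 < ε) {u₀ : ℝ} (hu : u₀ < K + 1)
    (v : ℝ) :
    HasDerivAt (fun u => ∫ z in (0:ℝ)..v, P p q ε K u z) (D p q ε K u₀ v) u₀ := by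
  have hr0 : 0 < (K + 1 - u₀) / 2 := by linarith
  have hball := ball_subset (K := K) hu
  obtain ⟨-, h⟩ := intervalIntegral.hasDerivAt_integral_of_dominated_loc_of_deriv_le
    (F := fun u z => P p q ε K u z) (F' := fun u z => G p q ε K u z)
    (bound := fun _ => (q - p + 2) / (q - p) * ((q - p) / (p - 1)) *
      (v ^ 2 + ε ^ 2) ^ ((q - p) / 2) * |v|)
    (a := 0) (b := v) (μ := MeasureTheory.volume) (Metric.ball_mem_nhds _ hr0)
    (by
      filter_upwards [Iio_mem_nhds hu] with u hu'
      exact (cont_P hp hq hε hu').aestronglyMeasurable.restrict)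
    ((cont_P hp hq hε hu).intervalIntegrable 0 v)
    (cont_G hp hq hε hu).aestronglyMeasurable.restrict
    (MeasureTheory.ae_of_all _ (fun z hz u hu' => G_bound hp hq hε (hball u hu') hz))
    (intervalIntegrable_const)
    (MeasureTheory.ae_of_all _ (fun z _ u hu' => hasDerivAt_P hp hq hε (hball u hu') z))
  exact h


lemma hasDerivAt_A (hp : 2 < p) (hq : p < q) (hε : 0 < ε) (v : ℝ) :
    HasDerivAt (A p q ε) ((q - p + 2) * v * (v ^ 2 + ε ^ 2) ^ ((q - p) / 2) / (p - 1)) v := by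
  have hXd : HasDerivAt (fun v : ℝ => v ^ 2 + ε ^ 2) (2 * v) v := by
    simpa using (hasDerivAt_pow 2 v).add_const (ε ^ 2)
  have h := (hXd.rpow_const (p := (q - p + 2) / 2) (Or.inl (hX hε v).ne')).div_const (p - 1)
  unfold A
  refine h.congr_deriv ?_
  rw [show (q - p + 2) / 2 - 1 = (q - p) / 2 by ring]
  ring

lemma alg (hp : 2 < p) (hq : p < q) (hε : 0 < ε) {u : ℝ} (hu : u < K + 1) (v : ℝ) :
    (q - p + 2) * v * (v ^ 2 + ε ^ 2) ^ ((q - p) / 2) / (p - 1) * F p q ε K u v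
      + A p q ε v * Fv p q ε K u v - v * Fu p q ε K u v = 0 := by
  have hX0 := hX hε v
  have hB := Bs_pos hp hq hε hu v
  have hp1 : p - 1 ≠ 0 := by linarith
  have hk : q - p ≠ 0 := by linarith
  have e1 : (v ^ 2 + ε ^ 2) ^ ((q - p + 2) / 2) =
      (v ^ 2 + ε ^ 2) ^ ((q - p) / 2) * (v ^ 2 + ε ^ 2) := by
    rw [show (q - p + 2) / 2 = (q - p) / 2 + 1 by ring, Real.rpow_add_one hX0.ne']
  have e2 : (v ^ 2 + ε ^ 2) ^ ((q - p) / 2 - 1) =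
      (v ^ 2 + ε ^ 2) ^ ((q - p) / 2) * (v ^ 2 + ε ^ 2)⁻¹ := by
    rw [show (q - p) / 2 - 1 = (q - p) / 2 + (-1) by ring, Real.rpow_add hX0,
      Real.rpow_neg_one]
  have e3 : Bs p q ε K u v ^ (-((q - p + 2) / (q - p))) =
      Bs p q ε K u v ^ (-((q - p + 2) / (q - p)) - 1) * Bs p q ε K u v := by
    nth_rewrite 1 [show -((q - p + 2) / (q - p)) = (-((q - p + 2) / (q - p)) - 1) + 1 by ring]
    rw [Real.rpow_add_one hB.ne']
  unfold F Fv Fu A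
  rw [e1, e2, e3]
  have hBexp : Bs p q ε K u v =
      1 + (q - p) / (p - 1) * (v ^ 2 + ε ^ 2) ^ ((q - p) / 2) * (K + 1 - u) := rfl
  rw [hBexp]
  field_simp
  ring


lemma hasDerivAt_Hfun (hp : 2 < p) (hq : p < q) (hε : 0 < ε) {u : ℝ} (hu : u < K + 1)
    (v : ℝ) :
    HasDerivAt (fun v' => D p q ε K u v' + A p q ε v' * F p q ε K u v'
      - v' * G p q ε K u v') 0 v := by
  have h1 : HasDerivAt (D p q ε K u) (G p q ε K u v) v :=
    ((cont_G hp hq hε hu).integral_hasStrictDerivAt 0 v).hasDerivAt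
  have h2 := (hasDerivAt_A hp hq hε v).mul (hasDerivAt_F_v hp hq hε hu v)
  have hG : HasDerivAt (G p q ε K u) (Fu p q ε K u v) v :=
    ((cont_Fu hp hq hε hu).integral_hasStrictDerivAt 0 v).hasDerivAt
  have h3 := (hasDerivAt_id' (x := v)).mul hG
  have h := (h1.add h2).sub h3
  refine h.congr_deriv ?_
  have halg := alg hp hq hε hu v
  linear_combination halg

lemma D_zero (u : ℝ) : D p q ε K u 0 = 0 := intervalIntegral.integral_same

end S10

theorem stmt_10 (p q ε K : ℝ) (hp : 2 < p) (hq : p < q)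
    (hε : ε ∈ Set.Ioo (0 : ℝ) (1 / 2)) (hK : 0 < K)
    (f ρ H Φ : ℝ → ℝ → ℝ)
    (hf : ∀ u v, f u v =
      (1 + ((q - p) / (p - 1)) * (v ^ 2 + ε ^ 2) ^ ((q - p) / 2) * (K + 1 - u))
        ^ (-((q - p + 2) / (q - p))))
    (hρ : ∀ u v, ρ u v = ∫ z in (0 : ℝ)..v, ∫ s in (0 : ℝ)..z, f u s)
    (hH : ∀ u v, H u v =
      deriv (fun u' => ρ u' v) u
        + ((v ^ 2 + ε ^ 2) ^ ((q - p + 2) / 2) / (p - 1)) * deriv (deriv (ρ u)) v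
        - v * deriv (fun v' => deriv (fun u' => ρ u' v') u) v)
    (hΦ : ∀ u v, Φ u v = ρ u v - (∫ s in (0 : ℝ)..u, H s 0) + (K + 1)) :
    ∀ u ∈ Set.Icc (-K) K, ∀ v : ℝ,
      deriv (fun u' => Φ u' v) u
        - v * deriv (fun v' => deriv (fun u' => Φ u' v') u) v
        + ((v ^ 2 + ε ^ 2) ^ ((q - p + 2) / 2) / (p - 1)) * deriv (deriv (Φ u)) v = 0 := by
  obtain ⟨hε0, -⟩ := hε
  intro u hu v
  have hu1 : u < K + 1 := lt_of_le_of_lt hu.2 (by linarith)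
  have hfF : ∀ x s, f x s = S10.F p q ε K x s := fun x s => by rw [hf]; rfl
  have hρP : ∀ x w, ρ x w = ∫ z in (0 : ℝ)..w, S10.P p q ε K x z := fun x w => by
    rw [hρ]; simp only [hfF]; rfl
  have hρu : ∀ u' ∈ Set.Iio (K + 1), ∀ w,
      HasDerivAt (fun x => ρ x w) (S10.D p q ε K u' w) u' := by
    intro u' hu' w
    have h := S10.hasDerivAt_rho_u hp hq hε0 hu' w
    simpa only [hρP] using h
  have hHform : ∀ u' ∈ Set.Iio (K + 1), ∀ w,
      H u' w = S10.D p q ε K u' w + S10.A p q ε w * S10.F p q ε K u' w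
        - w * S10.G p q ε K u' w := by
    intro u' hu' w
    rw [hH]
    have d1 : deriv (fun x => ρ x w) u' = S10.D p q ε K u' w := (hρu u' hu' w).deriv
    have hder_rho : deriv (ρ u') = S10.P p q ε K u' := by
      funext z
      have e : ρ u' = fun t => ∫ z in (0 : ℝ)..t, S10.P p q ε K u' z := funext (hρP u')
      rw [e]
      exact (((S10.cont_P hp hq hε0 hu').integral_hasStrictDerivAt 0 z).hasDerivAt).deriv
    have d2 : deriv (deriv (ρ u')) w = S10.F p q ε K u' w := by
      rw [hder_rho]
      exact (((S10.cont_F hp hq hε0 hu').integral_hasStrictDerivAt 0 w).hasDerivAt).deriv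
    have d3 : deriv (fun w' => deriv (fun x => ρ x w') u') w = S10.G p q ε K u' w := by
      have e : (fun w' => deriv (fun x => ρ x w') u') = S10.D p q ε K u' :=
        funext fun w' => (hρu u' hu' w').deriv
      rw [e]
      exact (((S10.cont_G hp hq hε0 hu').integral_hasStrictDerivAt 0 w).hasDerivAt).deriv
    rw [d1, d2, d3]
    rfl
  have hHconst : ∀ u' ∈ Set.Iio (K + 1), ∀ w, H u' w = H u' 0 := by
    intro u' hu' w
    have hfun : H u' = fun w' => S10.D p q ε K u' w' + S10.A p q ε w' * S10.F p q ε K u' w'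
        - w' * S10.G p q ε K u' w' := funext fun w' => hHform u' hu' w'
    rw [hfun]
    exact is_const_of_deriv_eq_zero
      (fun x => (S10.hasDerivAt_Hfun hp hq hε0 hu' x).differentiableAt)
      (fun x => (S10.hasDerivAt_Hfun hp hq hε0 hu' x).deriv) w 0
  have hH0 : ∀ u' ∈ Set.Iio (K + 1), H u' 0 = S10.A p q ε 0 * S10.F p q ε K u' 0 := by
    intro u' hu'
    rw [hHform u' hu' 0, S10.D_zero]
    ring
  have hQcont : ContinuousOn (fun s => S10.A p q ε 0 * S10.F p q ε K s 0)
      (Set.Iio (K + 1)) := by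
    apply ContinuousOn.mul continuousOn_const
    have hBc : Continuous (fun s : ℝ => S10.Bs p q ε K s 0) := by
      unfold S10.Bs
      continuity
    exact ContinuousOn.rpow_const hBc.continuousOn
      (fun s hs => Or.inl (S10.Bs_pos hp hq hε0 hs 0).ne')
  have hHcont : ContinuousOn (fun s => H s 0) (Set.Iio (K + 1)) :=
    hQcont.congr fun s hs => hH0 s hs
  have huIcc : Set.uIcc (0 : ℝ) u ⊆ Set.Iio (K + 1) := by
    intro x hx
    have h2 : x ≤ 0 ⊔ u := hx.2
    have h3 : (0 : ℝ) ⊔ u < K + 1 := sup_lt_iff.mpr ⟨by linarith, hu1⟩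
    exact lt_of_le_of_lt h2 h3
  have hint : IntervalIntegrable (fun s => H s 0) MeasureTheory.volume 0 u :=
    (hHcont.mono huIcc).intervalIntegrable
  have hFTC : HasDerivAt (fun x => ∫ s in (0 : ℝ)..x, H s 0) (H u 0) u :=
    intervalIntegral.integral_hasDerivAt_right hint
      (hHcont.stronglyMeasurableAtFilter isOpen_Iio u hu1)
      (hHcont.continuousAt (Iio_mem_nhds hu1))
  have hΦu : ∀ w, HasDerivAt (fun x => Φ x w) (S10.D p q ε K u w - H u 0) u := by
    intro w
    have h1 := S10.hasDerivAt_rho_u hp hq hε0 hu1 w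
    have h := (h1.sub hFTC).add_const (K + 1)
    have e : (fun x => Φ x w) = fun x =>
        ((∫ z in (0 : ℝ)..w, S10.P p q ε K x z) - ∫ s in (0 : ℝ)..x, H s 0) + (K + 1) := by
      funext x; rw [hΦ, hρP]
    rw [e]
    exact h
  have d1 : deriv (fun u' => Φ u' v) u = S10.D p q ε K u v - H u 0 := (hΦu v).deriv
  have d2 : deriv (fun v' => deriv (fun u' => Φ u' v') u) v = S10.G p q ε K u v := by
    have e : (fun v' => deriv (fun u' => Φ u' v') u) =
        fun v' => S10.D p q ε K u v' - H u 0 := funext fun w => (hΦu w).deriv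
    rw [e]
    exact ((((S10.cont_G hp hq hε0 hu1).integral_hasStrictDerivAt 0 v).hasDerivAt).sub_const
      _).deriv
  have d3 : deriv (deriv (Φ u)) v = S10.F p q ε K u v := by
    have e : Φ u = fun w =>
        ((∫ z in (0 : ℝ)..w, S10.P p q ε K u z) - ∫ s in (0 : ℝ)..u, H s 0) + (K + 1) := by
      funext w; rw [hΦ, hρP]
    have e2 : deriv (Φ u) = S10.P p q ε K u := by
      funext w
      rw [e]
      exact (((((S10.cont_P hp hq hε0 hu1).integral_hasStrictDerivAt 0 w).hasDerivAt).sub_const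
        _).add_const _).deriv
    rw [e2]
    exact (((S10.cont_F hp hq hε0 hu1).integral_hasStrictDerivAt 0 v).hasDerivAt).deriv
  rw [d1, d2, d3]
  have e1 := hHform u hu1 v
  have e2 := hHconst u hu1 v
  simp only [S10.A] at e1
  linear_combination e2 - e1
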